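/- There exists an absolute constant C > 0 with the following property. Let M ≥ 2 be an even integer, S ≥ 1 an integer, n = M^S, and let A = (a_1, …, a_n) and B = (b_1, …, b_n) be sequences of nonnegative real numbers. Suppose there exists α with 0 < α ≤ 1 such that for every recursion interval (l, r] one has α·A_{Σ(l,r]} ≤ B_{Σ(l,r]} ≤ A_{Σ(l,r]}. Then treerd_{M,S}(A, B) ≤ C·(1 + ln(1/α))·( (∑_{x=1}^{n} b_x)·S^{51/100} + (max_x a_x)·n·2^{−S^{3/200}} ). -/

import Mathlib

/-- Sum of the sequence `A` over the interval of indices `(l, r] = {l+1, …, r}`. -/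
noncomputable def iSum (A : ℕ → ℝ) (l r : ℕ) : ℝ := ∑ x ∈ Finset.Ioc l r, A x

/-- Total deviation `md_M` of the scale-`s` interval `(l, l + M^s]` of the sequence `A`. -/
noncomputable def mdAt (M s l : ℕ) (A : ℕ → ℝ) : ℝ :=
  ∑ i ∈ Finset.range M,
    |iSum A (l + i * M ^ (s - 1)) (l + (i + 1) * M ^ (s - 1)) -
      (1 / (M : ℝ)) * iSum A l (l + M ^ s)|

/-- Scaled total deviation `rd_M` of `A` by `B` on the scale-`s` interval `(l, l + M^s]`:
`(B_Σ/A_Σ)·md_M(A)` if `A_Σ ≠ 0`, and `0` otherwise. -/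
noncomputable def rdAt (M s l : ℕ) (A B : ℕ → ℝ) : ℝ :=
  if iSum A l (l + M ^ s) = 0 then 0
  else (iSum B l (l + M ^ s) / iSum A l (l + M ^ s)) * mdAt M s l A

/-- Scaled tree total deviation `treerd_{M,S}(A,B)`: sum of `rd_M` over all recursion
intervals. -/
noncomputable def treerd (M S : ℕ) (A B : ℕ → ℝ) : ℝ :=
  ∑ s ∈ Finset.Icc 1 S, ∑ k ∈ Finset.range (M ^ (S - s)), rdAt M s (k * M ^ s) A B

section Aux
open Finset

lemma expFac (x : ℝ) : (1-x) * Real.exp x ≤ 1 := by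
  have h := Real.add_one_le_exp (-x)
  have h2 : (1 - x) * Real.exp x ≤ Real.exp (-x) * Real.exp x := by
    apply mul_le_mul_of_nonneg_right _ (Real.exp_pos x).le; linarith
  rw [← Real.exp_add] at h2; simpa using h2

set_option maxHeartbeats 1000000 in
lemma bc (M : ℕ) (hM : 0 < M) (a : ℕ → ℝ) (ha : ∀ i ∈ range M, 0 ≤ a i)
    (T d : ℝ) (hT : T = ∑ i ∈ range M, a i)
    (hd : d = if T = 0 then 0 else (∑ i ∈ range M, |a i - T/(M:ℝ)|)/T) :
    Real.exp (d^2/8) * (∑ i ∈ range M, Real.sqrt (a i)) ≤ Real.sqrt ((M:ℝ) * T) := by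
  have hT0 : 0 ≤ T := hT ▸ Finset.sum_nonneg ha
  have hM0 : (0:ℝ) < (M:ℝ) := by exact_mod_cast hM
  by_cases h0 : T = 0
  · have hz : ∀ i ∈ range M, a i = 0 := by
      rw [← Finset.sum_eq_zero_iff_of_nonneg ha, ← hT, h0]
    have : ∑ i ∈ range M, Real.sqrt (a i) = 0 :=
      Finset.sum_eq_zero fun i hi => by rw [hz i hi, Real.sqrt_zero]
    rw [this, mul_zero]
    exact Real.sqrt_nonneg _
  · have hTpos : 0 < T := lt_of_le_of_ne hT0 (Ne.symm h0)
    set u : ℝ := T / (M:ℝ) with hu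
    have hupos : 0 < u := div_pos hTpos hM0
    set c : ℝ := ∑ i ∈ range M, Real.sqrt (a i) with hc
    have hc0 : 0 ≤ c := Finset.sum_nonneg fun i _ => Real.sqrt_nonneg _
    have hsq : ∀ i ∈ range M, Real.sqrt (a i) ^ 2 = a i := fun i hi => Real.sq_sqrt (ha i hi)
    have hMT0 : 0 ≤ (M:ℝ) * T := by positivity
    have hcs1 : c ≤ Real.sqrt ((M:ℝ)*T) := by
      have := Real.sum_mul_le_sqrt_mul_sqrt (range M) (fun _ => (1:ℝ)) (fun i => Real.sqrt (a i))
      simp only [one_mul, one_pow] at this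
      calc c ≤ Real.sqrt (∑ _i ∈ range M, (1:ℝ)) * Real.sqrt (∑ i ∈ range M, Real.sqrt (a i)^2) := this
        _ = Real.sqrt ((M:ℝ) * T) := by
            rw [Finset.sum_congr rfl hsq, ← hT, Finset.sum_const, card_range, nsmul_eq_mul, mul_one,
              ← Real.sqrt_mul (by positivity)]
    have hsu : Real.sqrt u * Real.sqrt ((M:ℝ)*T) = T := by
      rw [← Real.sqrt_mul hupos.le]
      rw [show u * ((M:ℝ)*T) = T^2 by rw [hu, ← mul_assoc, div_mul_cancel₀ T hM0.ne', sq]]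
      exact Real.sqrt_sq hTpos.le
    have huc : Real.sqrt u * c ≤ T := by
      calc Real.sqrt u * c ≤ Real.sqrt u * Real.sqrt ((M:ℝ)*T) :=
            mul_le_mul_of_nonneg_left hcs1 (Real.sqrt_nonneg _)
        _ = T := hsu
    set D : ℝ := ∑ i ∈ range M, |a i - u| with hD
    have hD0 : 0 ≤ D := Finset.sum_nonneg fun i _ => abs_nonneg _
    have hsumu : ∑ _x ∈ range M, u = T := by
      rw [Finset.sum_const, card_range, nsmul_eq_mul, hu]; field_simp
    have hsum2 : ∑ x ∈ range M, 2*Real.sqrt u*Real.sqrt (a x) = 2*Real.sqrt u*c := by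
      rw [hc, Finset.mul_sum]
    have hDcs : D ≤ Real.sqrt (2*T - 2*Real.sqrt u * c) * Real.sqrt (2*T + 2*Real.sqrt u * c) := by
      have hterm : ∀ i ∈ range M, |a i - u| =
          |Real.sqrt (a i) - Real.sqrt u| * (Real.sqrt (a i) + Real.sqrt u) := by
        intro i hi
        have h1 : (Real.sqrt (a i) - Real.sqrt u) * (Real.sqrt (a i) + Real.sqrt u) = a i - u := by
          have h2 : Real.sqrt u ^ 2 = u := Real.sq_sqrt hupos.le
          nlinarith [hsq i hi, h2]
        rw [← h1, abs_mul, abs_of_nonneg (by positivity : (0:ℝ) ≤ Real.sqrt (a i) + Real.sqrt u)]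
      have hcs := Real.sum_mul_le_sqrt_mul_sqrt (range M)
        (fun i => |Real.sqrt (a i) - Real.sqrt u|) (fun i => Real.sqrt (a i) + Real.sqrt u)
      have e1 : ∑ i ∈ range M, |Real.sqrt (a i) - Real.sqrt u|^2 = 2*T - 2*Real.sqrt u * c := by
        have he : ∀ i ∈ range M, |Real.sqrt (a i) - Real.sqrt u|^2
            = a i + u - 2*Real.sqrt u*Real.sqrt (a i) := by
          intro i hi
          rw [sq_abs]
          have h2 : Real.sqrt u ^ 2 = u := Real.sq_sqrt hupos.le
          nlinarith [hsq i hi, h2]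
        rw [Finset.sum_congr rfl he, Finset.sum_sub_distrib, Finset.sum_add_distrib, ← hT,
          hsumu, hsum2]
        ring
      have e2 : ∑ i ∈ range M, (Real.sqrt (a i) + Real.sqrt u)^2 = 2*T + 2*Real.sqrt u * c := by
        have he : ∀ i ∈ range M, (Real.sqrt (a i) + Real.sqrt u)^2
            = a i + u + 2*Real.sqrt u*Real.sqrt (a i) := by
          intro i hi
          have h2 : Real.sqrt u ^ 2 = u := Real.sq_sqrt hupos.le
          nlinarith [hsq i hi, h2]
        rw [Finset.sum_congr rfl he, Finset.sum_add_distrib, Finset.sum_add_distrib, ← hT,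
          hsumu, hsum2]
        ring
      calc D = ∑ i ∈ range M, |Real.sqrt (a i) - Real.sqrt u| * (Real.sqrt (a i) + Real.sqrt u) :=
            Finset.sum_congr rfl hterm
        _ ≤ Real.sqrt (∑ i ∈ range M, |Real.sqrt (a i) - Real.sqrt u|^2) *
            Real.sqrt (∑ i ∈ range M, (Real.sqrt (a i) + Real.sqrt u)^2) := hcs
        _ = Real.sqrt (2*T - 2*Real.sqrt u * c) * Real.sqrt (2*T + 2*Real.sqrt u * c) := by
            rw [e1, e2]
    -- final algebra
    have hminus0 : 0 ≤ 2*T - 2*Real.sqrt u*c := by linarith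
    have hplus : 2*T + 2*Real.sqrt u*c ≤ 4*T := by linarith
    have hplus0 : 0 ≤ 2*T + 2*Real.sqrt u*c := by positivity
    have hD2 : D^2 ≤ (2*T - 2*Real.sqrt u*c) * (4*T) := by
      calc D^2 ≤ (Real.sqrt (2*T - 2*Real.sqrt u * c) * Real.sqrt (2*T + 2*Real.sqrt u * c))^2 :=
            pow_le_pow_left₀ hD0 hDcs 2
        _ = (2*T - 2*Real.sqrt u*c) * (2*T + 2*Real.sqrt u*c) := by
            rw [mul_pow, Real.sq_sqrt hminus0, Real.sq_sqrt hplus0]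
        _ ≤ _ := mul_le_mul_of_nonneg_left hplus hminus0
    have hdd : d = D / T := by rw [hd, if_neg h0]
    have hDT : D = d * T := by rw [hdd]; field_simp
    have hsuc2 : Real.sqrt u * c ≤ T - d^2*T/8 := by nlinarith [hD2, hDT, hTpos]
    have hsqu_pos : 0 < Real.sqrt u := Real.sqrt_pos.mpr hupos
    have h7 : c ≤ Real.sqrt ((M:ℝ)*T) * (1 - d^2/8) := by
      have : Real.sqrt u * c ≤ Real.sqrt u * (Real.sqrt ((M:ℝ)*T) * (1 - d^2/8)) := by
        calc Real.sqrt u * c ≤ T - d^2*T/8 := hsuc2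
          _ = Real.sqrt u * (Real.sqrt ((M:ℝ)*T) * (1 - d^2/8)) := by
              rw [show Real.sqrt u * (Real.sqrt ((M:ℝ)*T) * (1 - d^2/8))
                  = (Real.sqrt u * Real.sqrt ((M:ℝ)*T)) * (1 - d^2/8) by ring, hsu]
              ring
      exact le_of_mul_le_mul_left this hsqu_pos
    calc Real.exp (d^2/8) * c ≤ Real.exp (d^2/8) * (Real.sqrt ((M:ℝ)*T) * (1 - d^2/8)) :=
          mul_le_mul_of_nonneg_left h7 (Real.exp_pos _).le
      _ = Real.sqrt ((M:ℝ)*T) * ((1 - d^2/8) * Real.exp (d^2/8)) := by ring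
      _ ≤ Real.sqrt ((M:ℝ)*T) * 1 := mul_le_mul_of_nonneg_left (expFac _) (Real.sqrt_nonneg _)
      _ = _ := mul_one _

noncomputable def Av (M : ℕ) (A : ℕ → ℝ) (s k : ℕ) : ℝ := iSum A (k*M^s) (k*M^s + M^s)
noncomputable def dv (M : ℕ) (A : ℕ → ℝ) (s k : ℕ) : ℝ :=
  if Av M A s k = 0 then 0 else mdAt M s (k*M^s) A / Av M A s k




lemma H1 (f : ℕ → ℝ) (l c : ℕ) : ∀ m : ℕ,
    ∑ i ∈ range m, (∑ x ∈ Ioc (l+i*c) (l+i*c+c), f x) = ∑ x ∈ Ioc l (l+m*c), f x := by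
  intro m
  induction m with
  | zero => simp
  | succ m ih =>
      rw [Finset.sum_range_succ, ih, show l+(m+1)*c = (l+m*c)+c by ring]
      exact Finset.sum_Ioc_consecutive f (by omega) (by omega)

lemma sum_blocks (f : ℕ → ℝ) (c : ℕ) : ∀ N : ℕ,
    ∑ j ∈ range (N*c), f j = ∑ k ∈ range N, ∑ i ∈ range c, f (k*c+i) := by
  intro N
  induction N with
  | zero => simp
  | succ N ih =>
      rw [Finset.sum_range_succ, ← ih, show (N+1)*c = N*c + c by ring,
        Finset.sum_range_add]

lemma divBlock (c k i : ℕ) (hc : 0 < c) (hi : i < c) : (k*c+i)/c = k := by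
  rw [Nat.add_div_of_dvd_right ⟨k, mul_comm _ _⟩, Nat.div_eq_of_lt hi, Nat.mul_div_cancel _ hc]
  omega

lemma dv_nonneg (M : ℕ) (A : ℕ → ℝ) (s k : ℕ)
    (hnn : ∀ x ∈ Ioc (k*M^s) (k*M^s + M^s), 0 ≤ A x) : 0 ≤ dv M A s k := by
  rw [dv]
  split_ifs with h
  · exact le_refl 0
  · apply div_nonneg
    · rw [mdAt]; exact Finset.sum_nonneg fun i _ => abs_nonneg _
    · rw [Av, iSum]; exact Finset.sum_nonneg hnn

lemma dv_le_two (M : ℕ) (hM : 0 < M) (A : ℕ → ℝ) (s k : ℕ) (hs : 1 ≤ s)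
    (hnn : ∀ x ∈ Ioc (k*M^s) (k*M^s + M^s), 0 ≤ A x) : dv M A s k ≤ 2 := by
  rw [dv]
  split_ifs with h
  · norm_num
  · have hpw : M^s = M^(s-1)*M := by
      conv_lhs => rw [show s = (s-1)+1 by omega]
      rw [pow_succ]
    have hAv0 : 0 ≤ Av M A s k := Finset.sum_nonneg hnn
    have hAvpos : 0 < Av M A s k := lt_of_le_of_ne hAv0 (Ne.symm h)
    rw [div_le_iff₀ hAvpos]
    have hsub : ∀ i ∈ range M, ∀ x ∈ Ioc (k*M^s + i*M^(s-1)) (k*M^s + i*M^(s-1) + M^(s-1)),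
        x ∈ Ioc (k*M^s) (k*M^s + M^s) := by
      intro i hi x hx
      have h3 : (i+1)*M^(s-1) ≤ M*M^(s-1) := Nat.mul_le_mul_right _ (by simpa using hi)
      have h4 : (i+1)*M^(s-1) = i*M^(s-1) + M^(s-1) := by ring
      have h5 : M^s = M*M^(s-1) := by rw [hpw]; ring
      simp only [Finset.mem_Ioc] at hx ⊢
      omega
    have hai : ∀ i ∈ range M, 0 ≤ iSum A (k*M^s + i*M^(s-1)) (k*M^s + i*M^(s-1) + M^(s-1)) := by
      intro i hi
      exact Finset.sum_nonneg fun x hx => hnn x (hsub i hi x hx)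
    have hsumai : ∑ i ∈ range M,
        iSum A (k*M^s + i*M^(s-1)) (k*M^s + i*M^(s-1) + M^(s-1)) = Av M A s k := by
      rw [Av, iSum]
      rw [show k*M^s + M^s = k*M^s + M*M^(s-1) by rw [hpw]; ring]
      exact H1 A (k*M^s) (M^(s-1)) M
    have hAvM : 0 < (M:ℝ) := by exact_mod_cast hM
    calc mdAt M s (k*M^s) A
        ≤ ∑ i ∈ range M, (iSum A (k*M^s + i*M^(s-1)) (k*M^s + i*M^(s-1) + M^(s-1))
            + (1/(M:ℝ)) * Av M A s k) := by
          rw [mdAt]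
          apply Finset.sum_le_sum
          intro i hi
          have h6 := hai i hi
          have h7 : 0 ≤ (1/(M:ℝ)) * Av M A s k := by positivity
          rw [show k*M^s + (i+1)*M^(s-1) = (k*M^s + i*M^(s-1)) + M^(s-1) by ring]
          rw [show (1/(M:ℝ)) * iSum A (k*M^s) (k*M^s + M^s) = (1/(M:ℝ)) * Av M A s k by rw [Av]]
          exact abs_le.mpr ⟨by linarith, by linarith⟩
      _ = 2 * Av M A s k := by
          rw [Finset.sum_add_distrib, hsumai, Finset.sum_const, card_range, nsmul_eq_mul]
          field_simp
          ring

lemma rd_eq (M s k : ℕ) (A B : ℕ → ℝ) :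
    rdAt M s (k*M^s) A B = iSum B (k*M^s) (k*M^s + M^s) * dv M A s k := by
  rw [rdAt, dv, Av]
  split_ifs with h
  · rw [mul_zero]
  · rw [div_mul_eq_mul_div, mul_div_assoc]

lemma treerd_eq (M S : ℕ) (hM : 0 < M) (A B : ℕ → ℝ) :
    treerd M S A B = ∑ j ∈ range (M^(S-1)),
      iSum B (j*M) (j*M+M) * ∑ s ∈ Icc 1 S, dv M A s (j / M^(s-1)) := by
  rw [treerd]
  have hinner : ∀ s ∈ Icc 1 S, ∑ k ∈ range (M^(S-s)), rdAt M s (k*M^s) A B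
      = ∑ j ∈ range (M^(S-1)), iSum B (j*M) (j*M+M) * dv M A s (j / M^(s-1)) := by
    intro s hs
    simp only [Finset.mem_Icc] at hs
    have hc : 0 < M^(s-1) := pow_pos hM _
    have hpw : M^(s-1)*M = M^s := by
      rw [← pow_succ]; congr 1; omega
    have hNc : M^(S-1) = M^(S-s) * M^(s-1) := by rw [← pow_add]; congr 1; omega
    rw [hNc, sum_blocks (fun j => iSum B (j*M) (j*M+M) * dv M A s (j / M^(s-1)))
      (M^(s-1)) (M^(S-s))]
    apply Finset.sum_congr rfl
    intro k _
    rw [rd_eq M s k A B]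
    have hterm : ∀ i ∈ range (M^(s-1)),
        iSum B ((k*M^(s-1)+i)*M) ((k*M^(s-1)+i)*M+M) * dv M A s ((k*M^(s-1)+i) / M^(s-1))
        = iSum B (k*M^s + i*M) ((k*M^s + i*M)+M) * dv M A s k := by
      intro i hi
      rw [divBlock _ _ _ hc (Finset.mem_range.mp hi),
        show (k*M^(s-1)+i)*M = k*M^s + i*M by rw [← hpw]; ring]
    rw [Finset.sum_congr rfl hterm, ← Finset.sum_mul]
    congr 1
    simp only [iSum]
    rw [show k*M^s + M^s = k*M^s + M^(s-1)*M by rw [hpw]]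
    exact (H1 B (k*M^s) M (M^(s-1))).symm
  rw [Finset.sum_congr rfl hinner, Finset.sum_comm]
  exact Finset.sum_congr rfl fun j _ => by rw [← Finset.mul_sum]

lemma key (M : ℕ) (hM : 0 < M) (A : ℕ → ℝ) : ∀ (s k : ℕ),
    (∀ x ∈ Finset.Ioc (k*M^s) (k*M^s + M^s), 0 ≤ A x) →
    ∑ x ∈ Finset.Ioc (k*M^s) (k*M^s + M^s),
      Real.sqrt (A x) * Real.exp ((∑ t ∈ Finset.Icc 1 s, (dv M A t ((x-1)/M^t))^2)/8)
      ≤ Real.sqrt ((M:ℝ)^s * Av M A s k) := by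
  intro s
  induction s with
  | zero =>
      intro k _
      have h1 : Finset.Ioc (k*M^0) (k*M^0 + M^0) = {k+1} := by
        simp only [pow_zero, mul_one]
        ext y; simp only [Finset.mem_Ioc, Finset.mem_singleton]; omega
      have h2 : Av M A 0 k = A (k+1) := by
        rw [Av, iSum, h1, Finset.sum_singleton]
      rw [h1, h2, Finset.sum_singleton]
      simp
  | succ s ih =>
      intro k hk
      have hpow : M^(s+1) = M^s*M := pow_succ M s
      have hLi : ∀ i : ℕ, (k*M+i)*M^s = k*M^(s+1) + i*M^s := fun i => by rw [hpow]; ring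
      have hchild : ∀ i, i < M → ∀ x ∈ Ioc (k*M^(s+1) + i*M^s) (k*M^(s+1) + i*M^s + M^s),
          x ∈ Ioc (k*M^(s+1)) (k*M^(s+1) + M^(s+1)) := by
        intro i hi x hx
        have h3 : (i+1)*M^s ≤ M*M^s := Nat.mul_le_mul_right _ (by omega)
        simp only [Finset.mem_Ioc] at hx ⊢
        have h4 : (i+1)*M^s = i*M^s + M^s := by ring
        have h5 : M^(s+1) = M*M^s := by rw [hpow]; ring
        omega
      have hxk : ∀ x ∈ Ioc (k*M^(s+1)) (k*M^(s+1) + M^(s+1)), (x-1)/M^(s+1) = k := by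
        intro x hx
        simp only [Finset.mem_Ioc] at hx
        apply Nat.div_eq_of_lt_le
        · omega
        · show x - 1 < (k+1) * M^(s+1)
          have : (k+1) * M^(s+1) = k*M^(s+1) + M^(s+1) := by ring
          omega
      -- abbreviations
      set E : ℝ := Real.exp ((dv M A (s+1) k)^2/8) with hE
      have hE0 : 0 ≤ E := (Real.exp_pos _).le
      have hT : Av M A (s+1) k = ∑ i ∈ range M, Av M A s (k*M+i) := by
        rw [Av, iSum, show k*M^(s+1) + M^(s+1) = k*M^(s+1) + M*M^s by rw [hpow]; ring,
          ← H1 A (k*M^(s+1)) (M^s) M]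
        exact Finset.sum_congr rfl fun i _ => by rw [Av, iSum, hLi i]
      have hmd : mdAt M (s+1) (k*M^(s+1)) A
          = ∑ i ∈ range M, |Av M A s (k*M+i) - (Av M A (s+1) k)/(M:ℝ)| := by
        rw [mdAt]
        apply Finset.sum_congr rfl
        intro i _
        simp only [Nat.add_sub_cancel]
        congr 1
        simp only [Av]
        rw [hLi i, show k*M^(s+1) + (i+1)*M^s = (k*M^(s+1) + i*M^s) + M^s by ring,
          one_div, inv_mul_eq_div]
      have hd : dv M A (s+1) k = if Av M A (s+1) k = 0 then 0 else
          (∑ i ∈ range M, |Av M A s (k*M+i) - (Av M A (s+1) k)/(M:ℝ)|)/(Av M A (s+1) k) := by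
        rw [dv, hmd]
      have hann : ∀ i ∈ range M, 0 ≤ Av M A s (k*M+i) := by
        intro i hi
        rw [Av, iSum]
        apply Finset.sum_nonneg
        intro x hx
        rw [hLi i] at hx
        exact hk x (hchild i (Finset.mem_range.mp hi) x hx)
      have hbc := bc M hM (fun i => Av M A s (k*M+i)) hann (Av M A (s+1) k) (dv M A (s+1) k) hT hd
      -- main chain
      have hsplit : ∀ g : ℕ → ℝ, ∑ x ∈ Ioc (k*M^(s+1)) (k*M^(s+1) + M^(s+1)), g x
          = ∑ i ∈ range M, ∑ x ∈ Ioc (k*M^(s+1)+i*M^s) (k*M^(s+1)+i*M^s+M^s), g x := by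
        intro g
        rw [show k*M^(s+1) + M^(s+1) = k*M^(s+1) + M*M^s by rw [hpow]; ring]
        exact (H1 g (k*M^(s+1)) (M^s) M).symm
      rw [hsplit]
      have hstep : ∀ i ∈ range M,
          ∑ x ∈ Ioc (k*M^(s+1)+i*M^s) (k*M^(s+1)+i*M^s+M^s),
            Real.sqrt (A x) * Real.exp ((∑ t ∈ Finset.Icc 1 (s+1), (dv M A t ((x-1)/M^t))^2)/8)
          = (∑ x ∈ Ioc (k*M^(s+1)+i*M^s) (k*M^(s+1)+i*M^s+M^s),
            Real.sqrt (A x) * Real.exp ((∑ t ∈ Finset.Icc 1 s, (dv M A t ((x-1)/M^t))^2)/8)) * E := by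
        intro i hi
        rw [Finset.sum_mul]
        apply Finset.sum_congr rfl
        intro x hx
        have hx' := hchild i (Finset.mem_range.mp hi) x hx
        rw [Finset.sum_Icc_succ_top (by omega : 1 ≤ s+1), hxk x hx']
        rw [show ((∑ t ∈ Finset.Icc 1 s, (dv M A t ((x-1)/M^t))^2) + (dv M A (s+1) k)^2)/8
          = (∑ t ∈ Finset.Icc 1 s, (dv M A t ((x-1)/M^t))^2)/8 + (dv M A (s+1) k)^2/8 by ring,
          Real.exp_add]
        rw [hE]; ring
      rw [Finset.sum_congr rfl hstep, ← Finset.sum_mul]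
      have hchain1 : ∑ i ∈ range M,
          (∑ x ∈ Ioc (k*M^(s+1)+i*M^s) (k*M^(s+1)+i*M^s+M^s),
            Real.sqrt (A x) * Real.exp ((∑ t ∈ Finset.Icc 1 s, (dv M A t ((x-1)/M^t))^2)/8))
          ≤ ∑ i ∈ range M, Real.sqrt ((M:ℝ)^s * Av M A s (k*M+i)) := by
        apply Finset.sum_le_sum
        intro i hi
        have hnn : ∀ x ∈ Ioc ((k*M+i)*M^s) ((k*M+i)*M^s + M^s), 0 ≤ A x := by
          intro x hx
          rw [hLi i] at hx
          exact hk x (hchild i (Finset.mem_range.mp hi) x hx)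
        have := ih (k*M+i) hnn
        rw [hLi i] at this
        exact this
      have hchain2 : ∑ i ∈ range M, Real.sqrt ((M:ℝ)^s * Av M A s (k*M+i))
          = Real.sqrt ((M:ℝ)^s) * ∑ i ∈ range M, Real.sqrt (Av M A s (k*M+i)) := by
        rw [Finset.mul_sum]
        exact Finset.sum_congr rfl fun i _ => Real.sqrt_mul (by positivity) _
      calc (∑ i ∈ range M,
          (∑ x ∈ Ioc (k*M^(s+1)+i*M^s) (k*M^(s+1)+i*M^s+M^s),
            Real.sqrt (A x) * Real.exp ((∑ t ∈ Finset.Icc 1 s, (dv M A t ((x-1)/M^t))^2)/8))) * E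
          ≤ (∑ i ∈ range M, Real.sqrt ((M:ℝ)^s * Av M A s (k*M+i))) * E :=
            mul_le_mul_of_nonneg_right hchain1 hE0
        _ = Real.sqrt ((M:ℝ)^s) * (E * ∑ i ∈ range M, Real.sqrt (Av M A s (k*M+i))) := by
            rw [hchain2]; ring
        _ ≤ Real.sqrt ((M:ℝ)^s) * Real.sqrt ((M:ℝ) * Av M A (s+1) k) :=
            mul_le_mul_of_nonneg_left hbc (Real.sqrt_nonneg _)
        _ = Real.sqrt ((M:ℝ)^(s+1) * Av M A (s+1) k) := by
            rw [← Real.sqrt_mul (by positivity), ← mul_assoc, ← pow_succ]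


lemma numeric (S : ℕ) (hS : 1 ≤ S) :
    2*(S:ℝ) * Real.exp (-((S:ℝ)^((1:ℝ)/50))/8)
      ≤ Real.exp (Real.exp 30) * (2:ℝ)^(-((S:ℝ)^((3:ℝ)/200))) := by
  have hS1 : (1:ℝ) ≤ (S:ℝ) := by exact_mod_cast hS
  have hS0 : (0:ℝ) < (S:ℝ) := by linarith
  set y : ℝ := (S:ℝ)^((1:ℝ)/200) with hy
  have hy1 : 1 ≤ y := Real.one_le_rpow hS1 (by norm_num)
  have hy0 : 0 < y := by linarith
  have h3 : (S:ℝ)^((3:ℝ)/200) = y^3 := by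
    rw [hy, ← Real.rpow_natCast ((S:ℝ)^((1:ℝ)/200)) 3, ← Real.rpow_mul hS0.le]
    norm_num
  have h4 : (S:ℝ)^((1:ℝ)/50) = y^4 := by
    rw [hy, ← Real.rpow_natCast ((S:ℝ)^((1:ℝ)/200)) 4, ← Real.rpow_mul hS0.le]
    norm_num
  have hlogy : Real.log (S:ℝ) = 200 * Real.log y := by
    rw [hy, Real.log_rpow hS0]; ring
  have hlogS : Real.log (S:ℝ) ≤ 200*y^3 := by
    have h5 : Real.log y ≤ y - 1 := Real.log_le_sub_one_of_pos hy0
    have h6 : y ≤ y^3 := by nlinarith [sq_nonneg y, sq_nonneg (y-1), mul_pos hy0 hy0]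
    rw [hlogy]; nlinarith
  have hlog2 : Real.log 2 ≤ (0.6931471808 : ℝ) := Real.log_two_lt_d9.le
  have he30 : (2.7:ℝ)^(30:ℕ) ≤ Real.exp 30 := by
    have h7 : Real.exp 30 = Real.exp 1 ^ (30:ℕ) := by
      rw [← Real.exp_nat_mul]; norm_num
    rw [h7]
    exact pow_le_pow_left₀ (by norm_num) (by linarith [Real.exp_one_gt_d9]) 30
  -- rewrite both sides as exponentials
  have h2S : (0:ℝ) < 2*(S:ℝ) := by linarith
  have lhs_eq : 2*(S:ℝ) * Real.exp (-((S:ℝ)^((1:ℝ)/50))/8)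
      = Real.exp (Real.log (2*(S:ℝ)) - y^4/8) := by
    rw [show Real.log (2*(S:ℝ)) - y^4/8 = Real.log (2*(S:ℝ)) + (-(y^4/8)) by ring,
      Real.exp_add, Real.exp_log h2S]
    congr 1
    rw [← h4]
    congr 1
    ring
  have rhs_eq : Real.exp (Real.exp 30) * (2:ℝ)^(-((S:ℝ)^((3:ℝ)/200)))
      = Real.exp (Real.exp 30 - y^3 * Real.log 2) := by
    rw [show Real.exp 30 - y^3 * Real.log 2 = Real.exp 30 + (-(y^3 * Real.log 2)) by ring,
      Real.exp_add]
    congr 1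
    rw [Real.rpow_def_of_pos (by norm_num : (0:ℝ) < 2)]
    congr 1
    rw [h3]
    ring
  rw [lhs_eq, rhs_eq, Real.exp_le_exp]
  have hlog2S : Real.log (2*(S:ℝ)) ≤ 0.6931471808 + 200*y^3 := by
    rw [Real.log_mul (by norm_num) (by linarith)]
    linarith
  have hlog2pos : 0 < Real.log 2 := Real.log_pos (by norm_num)
  have hy3 : (0:ℝ) < y^3 := by positivity
  by_cases hcase : y ≤ 1608
  · have hycube : y^3 ≤ 1608^3 := by
      have := pow_le_pow_left₀ hy0.le hcase 3
      simpa using this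
    have hbig : (2.7:ℝ)^(30:ℕ) ≥ 1 + 0.6931471808 + 201 * 1608^3 := by norm_num
    have hq : 0 ≤ y^4/8 := by positivity
    nlinarith
  · push_neg at hcase
    have : 201*y^3 ≤ y^4/8 := by nlinarith
    have h8 : (1:ℝ) ≤ Real.exp 30 := Real.one_le_exp (by norm_num)
    nlinarith

end Aux

set_option maxHeartbeats 2000000 in
/-- There is an absolute constant `C > 0` such that: for every even `M ≥ 2`,
`S ≥ 1`, `n = M^S`, nonnegative sequences `A, B`, and `0 < α ≤ 1` with
`α·A_Σ(l,r] ≤ B_Σ(l,r] ≤ A_Σ(l,r]` on every recursion interval `(l,r]`, one has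
`treerd_{M,S}(A,B) ≤ C·(1 + ln(1/α))·((∑ b_x)·S^{51/100} + (max_x a_x)·n·2^{−S^{3/200}})`. -/
theorem stmt4 :
    ∃ C : ℝ, 0 < C ∧
      ∀ (M S : ℕ) (hM : 2 ≤ M) (_hE : Even M) (hS : 1 ≤ S) (A B : ℕ → ℝ)
        (hA : ∀ x ∈ Finset.Icc 1 (M ^ S), 0 ≤ A x)
        (hB : ∀ x ∈ Finset.Icc 1 (M ^ S), 0 ≤ B x)
        (α : ℝ) (hα0 : 0 < α) (hα1 : α ≤ 1)
        (hratio : ∀ s ∈ Finset.Icc 1 S, ∀ k ∈ Finset.range (M ^ (S - s)),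
          α * iSum A (k * M ^ s) (k * M ^ s + M ^ s) ≤
              iSum B (k * M ^ s) (k * M ^ s + M ^ s) ∧
            iSum B (k * M ^ s) (k * M ^ s + M ^ s) ≤
              iSum A (k * M ^ s) (k * M ^ s + M ^ s)),
        treerd M S A B ≤
          C * (1 + Real.log (1 / α)) *
            ((∑ x ∈ Finset.Icc 1 (M ^ S), B x) * (S : ℝ) ^ ((51 : ℝ) / 100) +
              ((Finset.Icc 1 (M ^ S)).sup'
                  (Finset.nonempty_Icc.mpr (Nat.one_le_pow S M (by omega))) A) *
                (M ^ S : ℝ) * (2 : ℝ) ^ (-(S : ℝ) ^ ((3 : ℝ) / 200))) := by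
  classical
  refine ⟨Real.exp (Real.exp 30), Real.exp_pos _, ?_⟩
  intro M S hM _hE hS A B hA hB α hα0 hα1 hratio
  set C := Real.exp (Real.exp 30) with hC
  have hM0 : 0 < M := by omega
  have hn1 : 1 ≤ M^S := Nat.one_le_pow _ _ hM0
  have hne : (Finset.Icc 1 (M^S)).Nonempty := Finset.nonempty_Icc.mpr hn1
  show treerd M S A B ≤
      C * (1 + Real.log (1 / α)) *
        ((∑ x ∈ Finset.Icc 1 (M ^ S), B x) * (S : ℝ) ^ ((51 : ℝ) / 100) +
          ((Finset.Icc 1 (M ^ S)).sup' hne A) * (M ^ S : ℝ) *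
            (2 : ℝ) ^ (-(S : ℝ) ^ ((3 : ℝ) / 200)))
  set n := M^S with hn
  have hIcc : Finset.Icc 1 n = Finset.Ioc 0 n := by ext x; simp; omega
  have hA' : ∀ x ∈ Finset.Ioc 0 n, 0 ≤ A x := fun x hx => hA x (by rwa [hIcc])
  set m := (Finset.Icc 1 n).sup' hne A with hm
  have hmA : ∀ x ∈ Finset.Ioc 0 n, A x ≤ m := fun x hx => Finset.le_sup' A (by rwa [← hIcc] at hx)
  have h1mem : (1:ℕ) ∈ Finset.Icc 1 n := Finset.mem_Icc.mpr ⟨le_refl 1, hn1⟩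
  have hm0 : 0 ≤ m := le_trans (hA 1 h1mem) (Finset.le_sup' A h1mem)
  set T := ∑ x ∈ Finset.Ioc 0 n, A x with hT
  have hT0 : 0 ≤ T := Finset.sum_nonneg hA'
  have hnR0 : (0:ℝ) ≤ (n:ℝ) := by positivity
  have hTnm : T ≤ (n:ℝ)*m := by
    calc T ≤ (Finset.Ioc 0 n).card • m := Finset.sum_le_card_nsmul _ _ _ hmA
      _ = (n:ℝ)*m := by rw [Nat.card_Ioc]; simp [nsmul_eq_mul]
  -- node validity
  have hnodesub : ∀ s k, 1 ≤ s → s ≤ S → k < M^(S-s) →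
      ∀ x ∈ Finset.Ioc (k*M^s) (k*M^s+M^s), x ∈ Finset.Ioc 0 n := by
    intro s k h1 h2 h3 x hx
    have hprod : M^(S-s)*M^s = n := by rw [hn, ← pow_add]; congr 1; omega
    have h4 : (k+1)*M^s ≤ M^(S-s)*M^s := Nat.mul_le_mul_right _ (by omega)
    have h5 : (k+1)*M^s = k*M^s + M^s := by ring
    simp only [Finset.mem_Ioc] at hx ⊢
    omega
  have hnode : ∀ s k, 1 ≤ s → s ≤ S → k < M^(S-s) →
      ∀ x ∈ Finset.Ioc (k*M^s) (k*M^s+M^s), 0 ≤ A x :=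
    fun s k h1 h2 h3 x hx => hA' x (hnodesub s k h1 h2 h3 x hx)
  have hkval : ∀ j, j < M^(S-1) → ∀ s, 1 ≤ s → s ≤ S → j / M^(s-1) < M^(S-s) := by
    intro j hj s h1 h2
    rw [Nat.div_lt_iff_lt_mul (pow_pos hM0 _)]
    calc j < M^(S-1) := hj
      _ = M^(S-s) * M^(s-1) := by rw [← pow_add]; congr 1; omega
  set q : ℝ := (S:ℝ)^((1:ℝ)/50) with hq
  have hS0R : (0:ℝ) < (S:ℝ) := by exact_mod_cast hS
  have hq0 : (0:ℝ) ≤ q := Real.rpow_nonneg hS0R.le _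
  set W : ℕ → ℝ := fun j => ∑ s ∈ Finset.Icc 1 S, dv M A s (j / M^(s-1)) with hWdef
  set Qf : ℕ → ℝ := fun j => ∑ s ∈ Finset.Icc 1 S, (dv M A s (j / M^(s-1)))^2 with hQdef
  -- per-j bounds
  have hdvnn : ∀ j, j < M^(S-1) → ∀ s ∈ Finset.Icc 1 S, 0 ≤ dv M A s (j / M^(s-1)) := by
    intro j hj s hs
    simp only [Finset.mem_Icc] at hs
    exact dv_nonneg M A s _ (hnode s _ hs.1 hs.2 (hkval j hj s hs.1 hs.2))
  have hW0 : ∀ j, j < M^(S-1) → 0 ≤ W j := fun j hj => Finset.sum_nonneg (hdvnn j hj)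
  have hcard : (Finset.Icc 1 S).card = S := by rw [Nat.card_Icc]; omega
  have hWQ : ∀ j, j < M^(S-1) → W j ≤ Real.sqrt ((S:ℝ) * Qf j) := by
    intro j hj
    have hcs := Finset.sum_mul_sq_le_sq_mul_sq (Finset.Icc 1 S)
      (fun _ => (1:ℝ)) (fun s => dv M A s (j / M^(s-1)))
    simp only [one_pow, one_mul] at hcs
    have hcs' : (W j)^2 ≤ (S:ℝ) * Qf j := by
      calc (W j)^2 ≤ (∑ _s ∈ Finset.Icc 1 S, (1:ℝ)) * Qf j := hcs
        _ = (S:ℝ) * Qf j := by rw [Finset.sum_const, hcard, nsmul_eq_mul, mul_one]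
    calc W j = Real.sqrt ((W j)^2) := (Real.sqrt_sq (hW0 j hj)).symm
      _ ≤ _ := Real.sqrt_le_sqrt hcs'
  have hW2S : ∀ j, j < M^(S-1) → W j ≤ 2*(S:ℝ) := by
    intro j hj
    have := Finset.sum_le_card_nsmul (Finset.Icc 1 S)
      (fun s => dv M A s (j / M^(s-1))) 2 ?_
    · calc W j ≤ (Finset.Icc 1 S).card • (2:ℝ) := this
        _ = 2*(S:ℝ) := by rw [hcard, nsmul_eq_mul]; ring
    · intro s hs
      simp only [Finset.mem_Icc] at hs
      exact dv_le_two M hM0 A s _ hs.1 (hnode s _ hs.1 hs.2 (hkval j hj s hs.1 hs.2))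
  -- block facts
  have hpow1 : ∀ j:ℕ, j*M^1 = j*M := by intro j; rw [pow_one]
  have hblocksub : ∀ j, j < M^(S-1) → ∀ x ∈ Finset.Ioc (j*M) (j*M+M), x ∈ Finset.Ioc 0 n := by
    intro j hj x hx
    have h1S : (1:ℕ) ≤ S := hS
    have := hnodesub 1 j (le_refl 1) hS (by simpa [pow_one] using (by omega : j < M^(S-1))) x
    rw [pow_one] at this
    exact this hx
  have hBv1nn : ∀ j, j < M^(S-1) → 0 ≤ iSum B (j*M) (j*M+M) := by
    intro j hj
    exact Finset.sum_nonneg fun x hx => hB x (by rw [hIcc]; exact hblocksub j hj x hx)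
  have hBv1leAv1 : ∀ j, j < M^(S-1) → iSum B (j*M) (j*M+M) ≤ Av M A 1 j := by
    intro j hj
    have := (hratio 1 (Finset.mem_Icc.mpr ⟨le_refl 1, hS⟩) j (Finset.mem_range.mpr hj)).2
    rw [pow_one] at this
    rw [Av, pow_one]
    exact this
  -- root estimate
  have hroot : ∑ x ∈ Finset.Ioc 0 n,
      Real.sqrt (A x) * Real.exp ((∑ t ∈ Finset.Icc 1 S, (dv M A t ((x-1)/M^t))^2)/8)
      ≤ Real.sqrt ((n:ℝ) * T) := by
    have h0 := key M hM0 A S 0 (by simpa using hA')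
    simp only [zero_mul, zero_add] at h0
    have hAv0 : Av M A S 0 = T := by rw [Av, iSum]; simp; rfl
    have hMn : ((M:ℝ))^S = (n:ℝ) := by rw [hn]; push_cast; ring
    rw [hAv0, hMn] at h0
    exact h0
  -- Q constancy on blocks
  have hQx : ∀ j, j < M^(S-1) → ∀ x ∈ Finset.Ioc (j*M) (j*M+M),
      (∑ t ∈ Finset.Icc 1 S, (dv M A t ((x-1)/M^t))^2) = Qf j := by
    intro j hj x hx
    apply Finset.sum_congr rfl
    intro t ht
    simp only [Finset.mem_Icc] at ht
    have h9 : (x-1)/M^t = j/M^(t-1) := by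
      have hMt : M^t = M*M^(t-1) := by
        conv_lhs => rw [show t = 1+(t-1) by omega]
        rw [pow_add, pow_one]
      rw [hMt, ← Nat.div_div_eq_div_mul]
      congr 1
      apply Nat.div_eq_of_lt_le
      · simp only [Finset.mem_Ioc] at hx; omega
      · simp only [Finset.mem_Ioc] at hx
        have : (j+1)*M = j*M+M := by ring
        omega
    rw [h9]
  -- bad set bound
  set bad := (Finset.range (M^(S-1))).filter (fun j => q < Qf j) with hbad
  have hbadAv : ∑ j ∈ bad, Av M A 1 j ≤ Real.exp (-q/8) * ((n:ℝ)*m) := by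
    have hE8 : (0:ℝ) < Real.exp (q/8) := Real.exp_pos _
    have hstep1 : (∑ j ∈ bad, Av M A 1 j) * Real.exp (q/8)
        ≤ Real.sqrt m * Real.sqrt ((n:ℝ)*T) := by
      rw [Finset.sum_mul]
      have hperj : ∀ j ∈ bad, Av M A 1 j * Real.exp (q/8)
          ≤ Real.sqrt m * ∑ x ∈ Finset.Ioc (j*M) (j*M+M),
            Real.sqrt (A x) * Real.exp ((∑ t ∈ Finset.Icc 1 S, (dv M A t ((x-1)/M^t))^2)/8) := by
        intro j hj
        simp only [hbad, Finset.mem_filter, Finset.mem_range] at hj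
        obtain ⟨hjr, hjq⟩ := hj
        rw [Av, pow_one, iSum, Finset.sum_mul, Finset.mul_sum]
        apply Finset.sum_le_sum
        intro x hx
        rw [hQx j hjr x hx]
        have hAx0 : 0 ≤ A x := hA' x (hblocksub j hjr x hx)
        have hAxm : A x ≤ m := hmA x (hblocksub j hjr x hx)
        have h10 : A x ≤ Real.sqrt m * Real.sqrt (A x) := by
          calc A x = Real.sqrt (A x) * Real.sqrt (A x) := (Real.mul_self_sqrt hAx0).symm
            _ ≤ Real.sqrt m * Real.sqrt (A x) :=
              mul_le_mul_of_nonneg_right (Real.sqrt_le_sqrt hAxm) (Real.sqrt_nonneg _)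
        have h11 : Real.exp (q/8) ≤ Real.exp (Qf j/8) := by
          apply Real.exp_le_exp.mpr; linarith
        calc A x * Real.exp (q/8) ≤ (Real.sqrt m * Real.sqrt (A x)) * Real.exp (Qf j/8) := by
              apply mul_le_mul h10 h11 hE8.le
              positivity
          _ = Real.sqrt m * (Real.sqrt (A x) * Real.exp (Qf j/8)) := by ring
      calc ∑ j ∈ bad, Av M A 1 j * Real.exp (q/8)
          ≤ ∑ j ∈ bad, Real.sqrt m * ∑ x ∈ Finset.Ioc (j*M) (j*M+M),
            Real.sqrt (A x) * Real.exp ((∑ t ∈ Finset.Icc 1 S, (dv M A t ((x-1)/M^t))^2)/8) :=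
            Finset.sum_le_sum hperj
        _ = Real.sqrt m * ∑ j ∈ bad, ∑ x ∈ Finset.Ioc (j*M) (j*M+M),
            Real.sqrt (A x) * Real.exp ((∑ t ∈ Finset.Icc 1 S, (dv M A t ((x-1)/M^t))^2)/8) := by
            rw [Finset.mul_sum]
        _ ≤ Real.sqrt m * ∑ j ∈ Finset.range (M^(S-1)), ∑ x ∈ Finset.Ioc (j*M) (j*M+M),
            Real.sqrt (A x) * Real.exp ((∑ t ∈ Finset.Icc 1 S, (dv M A t ((x-1)/M^t))^2)/8) := by
            apply mul_le_mul_of_nonneg_left _ (Real.sqrt_nonneg _)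
            apply Finset.sum_le_sum_of_subset_of_nonneg (Finset.filter_subset _ _)
            intro j hj _
            exact Finset.sum_nonneg fun x _ => by positivity
        _ ≤ Real.sqrt m * Real.sqrt ((n:ℝ)*T) := by
            apply mul_le_mul_of_nonneg_left _ (Real.sqrt_nonneg _)
            have hH1 := H1 (fun x => Real.sqrt (A x) *
              Real.exp ((∑ t ∈ Finset.Icc 1 S, (dv M A t ((x-1)/M^t))^2)/8)) 0 M (M^(S-1))
            simp only [zero_add] at hH1
            have hMSn : M^(S-1)*M = n := by rw [hn, ← pow_succ]; congr 1; omega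
            rw [hMSn] at hH1
            rw [hH1]
            exact hroot
    have hsqrtprod : Real.sqrt m * Real.sqrt ((n:ℝ)*T) ≤ (n:ℝ)*m := by
      calc Real.sqrt m * Real.sqrt ((n:ℝ)*T)
          ≤ Real.sqrt m * Real.sqrt ((n:ℝ)*((n:ℝ)*m)) := by
            apply mul_le_mul_of_nonneg_left _ (Real.sqrt_nonneg _)
            exact Real.sqrt_le_sqrt (mul_le_mul_of_nonneg_left hTnm hnR0)
        _ = Real.sqrt (m * ((n:ℝ)*((n:ℝ)*m))) := (Real.sqrt_mul hm0 _).symm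
        _ = Real.sqrt (((n:ℝ)*m)^2) := by ring_nf
        _ = (n:ℝ)*m := Real.sqrt_sq (mul_nonneg hnR0 hm0)
    have h12 : (∑ j ∈ bad, Av M A 1 j) ≤ ((n:ℝ)*m) / Real.exp (q/8) := by
      rw [le_div_iff₀ hE8]
      exact le_trans hstep1 hsqrtprod
    calc ∑ j ∈ bad, Av M A 1 j ≤ ((n:ℝ)*m) / Real.exp (q/8) := h12
      _ = Real.exp (-q/8) * ((n:ℝ)*m) := by
          rw [show -q/8 = -(q/8) by ring, Real.exp_neg]
          rw [div_eq_mul_inv, mul_comm]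
  -- good set bound
  have hMnR : ((M:ℝ))^S = (n:ℝ) := by rw [hn]; push_cast; ring
  have hsqq : Real.sqrt ((S:ℝ)*q) = (S:ℝ)^((51:ℝ)/100) := by
    rw [hq, show ((S:ℝ)) * (S:ℝ)^((1:ℝ)/50) = (S:ℝ)^((51:ℝ)/50) by
      nth_rewrite 1 [← Real.rpow_one (S:ℝ)]
      rw [← Real.rpow_add hS0R]; norm_num]
    rw [Real.sqrt_eq_rpow, ← Real.rpow_mul hS0R.le]
    norm_num
  have htree' : treerd M S A B = ∑ j ∈ Finset.range (M^(S-1)), iSum B (j*M) (j*M+M) * W j := by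
    rw [treerd_eq M S hM0 A B]
  have hsplit := Finset.sum_filter_add_sum_filter_not (Finset.range (M^(S-1)))
    (fun j => q < Qf j) (fun j => iSum B (j*M) (j*M+M) * W j)
  have hBtot : ∑ j ∈ Finset.range (M^(S-1)), iSum B (j*M) (j*M+M)
      = ∑ x ∈ Finset.Icc 1 n, B x := by
    rw [hIcc]
    have hH1B := H1 B 0 M (M^(S-1))
    simp only [zero_add] at hH1B
    have hMSn : M^(S-1)*M = n := by rw [hn, ← pow_succ]; congr 1; omega
    rw [hMSn] at hH1B
    simp only [iSum]
    exact hH1B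
  have hgood : ∑ j ∈ (Finset.range (M^(S-1))).filter (fun j => ¬ q < Qf j),
      iSum B (j*M) (j*M+M) * W j ≤ (∑ x ∈ Finset.Icc 1 n, B x) * (S:ℝ)^((51:ℝ)/100) := by
    calc ∑ j ∈ (Finset.range (M^(S-1))).filter (fun j => ¬ q < Qf j),
        iSum B (j*M) (j*M+M) * W j
        ≤ ∑ j ∈ (Finset.range (M^(S-1))).filter (fun j => ¬ q < Qf j),
          iSum B (j*M) (j*M+M) * (S:ℝ)^((51:ℝ)/100) := by
          apply Finset.sum_le_sum
          intro j hj
          simp only [Finset.mem_filter, Finset.mem_range, not_lt] at hj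
          obtain ⟨hjr, hjq⟩ := hj
          apply mul_le_mul_of_nonneg_left _ (hBv1nn j hjr)
          calc W j ≤ Real.sqrt ((S:ℝ) * Qf j) := hWQ j hjr
            _ ≤ Real.sqrt ((S:ℝ) * q) :=
              Real.sqrt_le_sqrt (mul_le_mul_of_nonneg_left hjq hS0R.le)
            _ = _ := hsqq
      _ = (∑ j ∈ (Finset.range (M^(S-1))).filter (fun j => ¬ q < Qf j),
          iSum B (j*M) (j*M+M)) * (S:ℝ)^((51:ℝ)/100) := (Finset.sum_mul _ _ _).symm
      _ ≤ (∑ j ∈ Finset.range (M^(S-1)), iSum B (j*M) (j*M+M)) * (S:ℝ)^((51:ℝ)/100) := by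
          apply mul_le_mul_of_nonneg_right _ (Real.rpow_nonneg hS0R.le _)
          apply Finset.sum_le_sum_of_subset_of_nonneg (Finset.filter_subset _ _)
          intro j hj _
          exact hBv1nn j (Finset.mem_range.mp hj)
      _ = _ := by rw [hBtot]
  have hbadB : ∑ j ∈ bad, iSum B (j*M) (j*M+M) * W j
      ≤ 2*(S:ℝ)*(Real.exp (-q/8) * ((n:ℝ)*m)) := by
    calc ∑ j ∈ bad, iSum B (j*M) (j*M+M) * W j
        ≤ ∑ j ∈ bad, Av M A 1 j * (2*(S:ℝ)) := by
          apply Finset.sum_le_sum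
          intro j hj
          simp only [hbad, Finset.mem_filter, Finset.mem_range] at hj
          obtain ⟨hjr, _⟩ := hj
          calc iSum B (j*M) (j*M+M) * W j ≤ iSum B (j*M) (j*M+M) * (2*(S:ℝ)) :=
                mul_le_mul_of_nonneg_left (hW2S j hjr) (hBv1nn j hjr)
            _ ≤ Av M A 1 j * (2*(S:ℝ)) :=
                mul_le_mul_of_nonneg_right (hBv1leAv1 j hjr) (by positivity)
      _ = (∑ j ∈ bad, Av M A 1 j) * (2*(S:ℝ)) := (Finset.sum_mul _ _ _).symm
      _ ≤ (Real.exp (-q/8) * ((n:ℝ)*m)) * (2*(S:ℝ)) :=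
          mul_le_mul_of_nonneg_right hbadAv (by positivity)
      _ = 2*(S:ℝ)*(Real.exp (-q/8) * ((n:ℝ)*m)) := by ring
  -- numeric input
  have hnum := numeric S hS
  rw [← hq, ← hC] at hnum
  -- final combination
  have hK1 : 1 ≤ 1 + Real.log (1/α) := by
    have := Real.log_nonneg (one_le_one_div hα0 hα1)
    linarith
  have hC1 : (1:ℝ) ≤ C := by rw [hC]; exact Real.one_le_exp (Real.exp_pos 30).le
  have hC0 : (0:ℝ) < C := by linarith
  have hCK : 1 ≤ C * (1 + Real.log (1/α)) := by nlinarith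
  have hBtotnn : 0 ≤ ∑ x ∈ Finset.Icc 1 n, B x := Finset.sum_nonneg (fun x hx => hB x hx)
  have hrp51 : 0 ≤ (S:ℝ)^((51:ℝ)/100) := Real.rpow_nonneg hS0R.le _
  have h2y : 0 ≤ (2:ℝ)^(-(S:ℝ)^((3:ℝ)/200)) := Real.rpow_nonneg (by norm_num) _
  have hfin2 : 2*(S:ℝ)*(Real.exp (-q/8) * ((n:ℝ)*m))
      ≤ C * (m * (M ^ S : ℝ) * (2:ℝ)^(-(S:ℝ)^((3:ℝ)/200))) := by
    calc 2*(S:ℝ)*(Real.exp (-q/8) * ((n:ℝ)*m))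
        = (2*(S:ℝ)*Real.exp (-q/8)) * ((n:ℝ)*m) := by ring
      _ ≤ (C * (2:ℝ)^(-(S:ℝ)^((3:ℝ)/200))) * ((n:ℝ)*m) := by
          apply mul_le_mul_of_nonneg_right _ (mul_nonneg hnR0 hm0)
          exact hnum
      _ = C * (m * (n:ℝ) * (2:ℝ)^(-(S:ℝ)^((3:ℝ)/200))) := by ring
      _ = C * (m * (M ^ S : ℝ) * (2:ℝ)^(-(S:ℝ)^((3:ℝ)/200))) := by rw [hMnR]
  have hstep : treerd M S A B ≤ (∑ x ∈ Finset.Icc 1 n, B x) * (S:ℝ)^((51:ℝ)/100)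
      + 2*(S:ℝ)*(Real.exp (-q/8) * ((n:ℝ)*m)) := by
    rw [htree', ← hsplit]
    have : ∑ j ∈ (Finset.range (M^(S-1))).filter (fun j => q < Qf j),
        iSum B (j*M) (j*M+M) * W j = ∑ j ∈ bad, iSum B (j*M) (j*M+M) * W j := by rw [hbad]
    rw [this]
    linarith [hgood, hbadB]
  have hX : (∑ x ∈ Finset.Icc 1 n, B x) * (S:ℝ)^((51:ℝ)/100)
      ≤ C * (1 + Real.log (1/α)) * ((∑ x ∈ Finset.Icc 1 n, B x) * (S:ℝ)^((51:ℝ)/100)) :=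
    le_mul_of_one_le_left (mul_nonneg hBtotnn hrp51) hCK
  have hY : 2*(S:ℝ)*(Real.exp (-q/8) * ((n:ℝ)*m))
      ≤ C * (1 + Real.log (1/α)) * (m * (M ^ S : ℝ) * (2:ℝ)^(-(S:ℝ)^((3:ℝ)/200))) := by
    refine le_trans hfin2 ?_
    have hnn : 0 ≤ m * (M ^ S : ℝ) * (2:ℝ)^(-(S:ℝ)^((3:ℝ)/200)) :=
      mul_nonneg (mul_nonneg hm0 (by positivity)) h2y
    calc C * (m * (M ^ S : ℝ) * (2:ℝ)^(-(S:ℝ)^((3:ℝ)/200)))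
        ≤ C * ((1 + Real.log (1/α)) * (m * (M ^ S : ℝ) * (2:ℝ)^(-(S:ℝ)^((3:ℝ)/200)))) :=
          mul_le_mul_of_nonneg_left (le_mul_of_one_le_left hnn hK1) hC0.le
      _ = C * (1 + Real.log (1/α)) * (m * (M ^ S : ℝ) * (2:ℝ)^(-(S:ℝ)^((3:ℝ)/200))) :=
          (mul_assoc _ _ _).symm
  calc treerd M S A B
      ≤ (∑ x ∈ Finset.Icc 1 n, B x) * (S:ℝ)^((51:ℝ)/100)
        + 2*(S:ℝ)*(Real.exp (-q/8) * ((n:ℝ)*m)) := hstep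
    _ ≤ C * (1 + Real.log (1/α)) * ((∑ x ∈ Finset.Icc 1 n, B x) * (S:ℝ)^((51:ℝ)/100))
        + C * (1 + Real.log (1/α)) * (m * (M ^ S : ℝ) * (2:ℝ)^(-(S:ℝ)^((3:ℝ)/200))) :=
        add_le_add hX hY
    _ = C * (1 + Real.log (1/α)) *
        ((∑ x ∈ Finset.Icc 1 n, B x) * (S:ℝ)^((51:ℝ)/100)
          + m * (M ^ S : ℝ) * (2:ℝ)^(-(S:ℝ)^((3:ℝ)/200))) := (mul_add _ _ _).symm
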